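/- Let Ω = [[v₁, c],[c, v₂]] be positive definite and 𝟙 = (1,1)ᵀ. The minimizer of τ ↦ (τ𝟙 − τ̂)ᵀ Ω⁻¹ (τ𝟙 − τ̂) over τ ∈ ℝ, where τ̂ = (τ̂₁, τ̂₂)ᵀ, is the weighted average w₁τ̂₁ + w₂τ̂₂ with w₁ = (v₂ − c)/(v₁ + v₂ − 2c) and w₂ = (v₁ − c)/(v₁ + v₂ − 2c), and w₁ + w₂ = 1. -/

import Mathlib

open Matrix

/-- The minimizer of the GMM objective with the optimal weight matrix
Ω⁻¹ is the weighted average w₁tau₁ + w₂tau₂ with w₁ = (v₂−c)/(v₁+v₂−2c),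
w₂ = (v₁−c)/(v₁+v₂−2c), and w₁ + w₂ = 1. -/
theorem double_did_closed_form_weights
    (v₁ v₂ c : ℝ)
    (hΩ : (!![v₁, c; c, v₂] : Matrix (Fin 2) (Fin 2) ℝ).PosDef)
    (tau₁ tau₂ : ℝ)
    (f : ℝ → ℝ)
    (hf : ∀ τ, f τ = ![τ - tau₁, τ - tau₂] ⬝ᵥ
        ((!![v₁, c; c, v₂] : Matrix (Fin 2) (Fin 2) ℝ)⁻¹).mulVec ![τ - tau₁, τ - tau₂])
    (w₁ w₂ : ℝ)
    (hw₁ : w₁ = (v₂ - c) / (v₁ + v₂ - 2 * c))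
    (hw₂ : w₂ = (v₁ - c) / (v₁ + v₂ - 2 * c)) :
    w₁ + w₂ = 1 ∧ ∀ τ : ℝ, f (w₁ * tau₁ + w₂ * tau₂) ≤ f τ := by
  have hdet : (0:ℝ) < v₁ * v₂ - c * c := by
    have := hΩ.det_pos
    rwa [Matrix.det_fin_two_of] at this
  have hd : (0:ℝ) < v₁ + v₂ - 2 * c := by
    have h := hΩ.dotProduct_mulVec_pos (x := ![(1:ℝ), -1]) (by
      intro h
      have := congrFun h 0
      simp at this)
    simp [Matrix.mulVec, dotProduct, Fin.sum_univ_two] at h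
    nlinarith [h]
  have hdne : (v₁ + v₂ - 2 * c) ≠ 0 := ne_of_gt hd
  have hdetne : (v₁ * v₂ - c * c) ≠ 0 := ne_of_gt hdet
  have hinv : (!![v₁, c; c, v₂] : Matrix (Fin 2) (Fin 2) ℝ)⁻¹
      = (v₁ * v₂ - c * c)⁻¹ • !![v₂, -c; -c, v₁] := by
    rw [Matrix.inv_def, Matrix.adjugate_fin_two_of, Matrix.det_fin_two_of,
      Ring.inverse_eq_inv]
  have hf' : ∀ τ, f τ = (v₁ * v₂ - c * c)⁻¹ *
      ((τ - tau₁) * ((τ - tau₁) * v₂ - (τ - tau₂) * c)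
        + (τ - tau₂) * ((τ - tau₂) * v₁ - (τ - tau₁) * c)) := by
    intro τ
    rw [hf, hinv]
    simp [Matrix.mulVec, dotProduct, Fin.sum_univ_two]
    ring
  constructor
  · rw [hw₁, hw₂]
    field_simp [show v₁ + v₂ - c * 2 ≠ 0 by rwa [mul_comm]]
    ring
  · intro τ
    rw [hf' τ, hf' _]
    rw [← sub_nonneg]
    have key : (v₁ * v₂ - c * c)⁻¹ *
      ((τ - tau₁) * ((τ - tau₁) * v₂ - (τ - tau₂) * c)
        + (τ - tau₂) * ((τ - tau₂) * v₁ - (τ - tau₁) * c))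
      - (v₁ * v₂ - c * c)⁻¹ *
      ((w₁ * tau₁ + w₂ * tau₂ - tau₁) * ((w₁ * tau₁ + w₂ * tau₂ - tau₁) * v₂
          - (w₁ * tau₁ + w₂ * tau₂ - tau₂) * c)
        + (w₁ * tau₁ + w₂ * tau₂ - tau₂) * ((w₁ * tau₁ + w₂ * tau₂ - tau₂) * v₁
          - (w₁ * tau₁ + w₂ * tau₂ - tau₁) * c))
      = (v₁ * v₂ - c * c)⁻¹ * (v₁ + v₂ - 2 * c) *
        (τ - (w₁ * tau₁ + w₂ * tau₂))^2 := by
      rw [hw₁, hw₂]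
      field_simp [show v₁ + v₂ - c * 2 ≠ 0 by rwa [mul_comm]]
      ring
    rw [key]
    positivity
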